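/- Let (A_n) and (B_n) be real-valued random variables on a common probability space and (ℱ_n) sub-σ-algebras such that B_n is ℱ_n-measurable for each n. Let ξ₁ and ξ₂ be real random variables with continuous cumulative distribution functions. Suppose that for every a ∈ ℝ, P(A_n ≤ a | ℱ_n) → P(ξ₁ ≤ a) almost surely as n → ∞, and that B_n converges in distribution to ξ₂. Then for all a, b ∈ ℝ, P(A_n ≤ a, B_n ≤ b) → P(ξ₁ ≤ a) · P(ξ₂ ≤ b); that is, (A_n, B_n) converges in distribution to a pair of independent random variables distributed as ξ₁ and ξ₂ respectively. -/

import Mathlib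

open MeasureTheory ProbabilityTheory Filter

noncomputable section

/-- Let `A_n`, `B_n` be real random variables and `ℱ_n`
sub-σ-algebras with `B_n` `ℱ_n`-measurable, and let `ξ₁`, `ξ₂` have continuous
CDFs. If for every `a`, `P(A_n ≤ a | ℱ_n) → P(ξ₁ ≤ a)` almost surely, and
`B_n →d ξ₂`, then `P(A_n ≤ a, B_n ≤ b) → P(ξ₁ ≤ a) P(ξ₂ ≤ b)` for all `a, b`;
that is, `(A_n, B_n)` converges in distribution to an independent pair
distributed as `(ξ₁, ξ₂)`. -/
theorem statement17 {Ω : Type*} [m0 : MeasurableSpace Ω] (P : Measure Ω)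
    [IsProbabilityMeasure P]
    (A B : ℕ → Ω → ℝ) (F : ℕ → MeasurableSpace Ω)
    (hF : ∀ n, F n ≤ m0)
    (hA : ∀ n, Measurable (A n))
    (hB : ∀ n, Measurable[F n] (B n))
    (ξ₁ ξ₂ : Ω → ℝ) (hξ₁ : Measurable ξ₁) (hξ₂ : Measurable ξ₂)
    (hcdf₁ : Continuous fun a : ℝ => (P {ω | ξ₁ ω ≤ a}).toReal)
    (hcdf₂ : Continuous fun b : ℝ => (P {ω | ξ₂ ω ≤ b}).toReal)
    -- for every `a`, `P(A_n ≤ a | ℱ_n) → P(ξ₁ ≤ a)` a.s.: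
    (hcond : ∀ a : ℝ, ∀ᵐ ω ∂P,
      Tendsto (fun n =>
          (P[Set.indicator {ω' | A n ω' ≤ a} (fun _ => (1 : ℝ))|F n]) ω)
        atTop (nhds ((P {ω | ξ₁ ω ≤ a}).toReal)))
    -- `B_n` converges in distribution to `ξ₂`:
    (hBdist : ∀ b : ℝ,
      Tendsto (fun n => (P {ω | B n ω ≤ b}).toReal) atTop
        (nhds ((P {ω | ξ₂ ω ≤ b}).toReal))) :
    ∀ a b : ℝ,
      Tendsto (fun n => (P {ω | A n ω ≤ a ∧ B n ω ≤ b}).toReal) atTop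
        (nhds ((P {ω | ξ₁ ω ≤ a}).toReal * (P {ω | ξ₂ ω ≤ b}).toReal)) := by
  intro a b
  set c : ℝ := (P {ω | ξ₁ ω ≤ a}).toReal with hc
  have hc0 : 0 ≤ c := ENNReal.toReal_nonneg
  set f : ℕ → Ω → ℝ := fun n => Set.indicator {ω' | A n ω' ≤ a} (fun _ => (1 : ℝ)) with hf
  have hTmeas : ∀ n, MeasurableSet {ω | A n ω ≤ a} := fun n =>
    measurableSet_le (hA n) measurable_const
  have hfint : ∀ n, Integrable (f n) P := fun n =>
    (integrable_const (1 : ℝ)).indicator (hTmeas n)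
  set g : ℕ → Ω → ℝ := fun n => P[f n | F n] with hg
  have hSmeas : ∀ n, MeasurableSet[F n] {ω | B n ω ≤ b} := fun n =>
    measurableSet_le (hB n) measurable_const
  -- key identity: ∫_{S n} g n = P(A ≤ a ∧ B ≤ b)
  have hkey : ∀ n, ∫ ω in {ω | B n ω ≤ b}, g n ω ∂P
      = (P {ω | A n ω ≤ a ∧ B n ω ≤ b}).toReal := by
    intro n
    rw [setIntegral_condExp (hF n) (hfint n) (hSmeas n)]
    rw [hf]
    rw [setIntegral_indicator (hTmeas n)]
    rw [setIntegral_const]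
    have : {ω | B n ω ≤ b} ∩ {ω' | A n ω' ≤ a} = {ω | A n ω ≤ a ∧ B n ω ≤ b} := by
      ext ω; simp [and_comm]
    rw [this, smul_eq_mul, mul_one]; rfl
  -- bounds on g
  have hg0 : ∀ n, 0 ≤ᵐ[P] g n := fun n =>
    condExp_nonneg (ae_of_all _ fun ω => Set.indicator_nonneg (fun _ _ => zero_le_one) ω)
  have hg1 : ∀ n, g n ≤ᵐ[P] fun _ => (1 : ℝ) := by
    intro n
    have h := condExp_mono (μ := P) (m := F n) (hfint n) (integrable_const (1 : ℝ))
      (ae_of_all _ fun ω => Set.indicator_le' (fun _ _ => le_rfl) (fun _ _ => zero_le_one) ω)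
    rwa [condExp_const (hF n) (1 : ℝ)] at h
  -- ∫ |g n - c| → 0
  have habs : Tendsto (fun n => ∫ ω, |g n ω - c| ∂P) atTop (nhds 0) := by
    have := tendsto_integral_of_dominated_convergence (μ := P) (fun _ => 1 + c)
      (F := fun n ω => |g n ω - c|) (f := fun _ => (0 : ℝ)) ?_ (integrable_const (1 + c)) ?_ ?_
    · simpa using this
    · intro n
      have h1 : AEStronglyMeasurable (g n - fun _ => c) P :=
        (stronglyMeasurable_condExp.mono (hF n)).aestronglyMeasurable.sub
          aestronglyMeasurable_const
      simpa [Real.norm_eq_abs, Pi.sub_apply] using h1.norm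
    · intro n
      filter_upwards [hg0 n, hg1 n] with ω h0 h1
      simp only [Pi.zero_apply] at h0
      rw [Real.norm_eq_abs, abs_abs]
      rw [abs_sub_le_iff]
      constructor
      · linarith
      · linarith
    · filter_upwards [hcond a] with ω hω
      have h2 : Tendsto (fun n => |g n ω - c|) atTop (nhds |c - c|) :=
        (hω.sub tendsto_const_nhds).abs
      simpa using h2
  -- the remainder term tends to 0
  have hrem : Tendsto (fun n => ∫ ω in {ω | B n ω ≤ b}, (g n ω - c) ∂P) atTop (nhds 0) := by
    refine squeeze_zero_norm (fun n => ?_) habs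
    calc ‖∫ ω in {ω | B n ω ≤ b}, (g n ω - c) ∂P‖
        ≤ ∫ ω in {ω | B n ω ≤ b}, ‖g n ω - c‖ ∂P := norm_integral_le_integral_norm _
      _ ≤ ∫ ω, ‖g n ω - c‖ ∂P := by
          refine setIntegral_le_integral ((integrable_condExp.sub (integrable_const c)).norm)
            (ae_of_all _ fun ω => norm_nonneg _)
      _ = ∫ ω, |g n ω - c| ∂P := by simp [Real.norm_eq_abs]
  -- rewrite target
  have hdecomp : ∀ n, (P {ω | A n ω ≤ a ∧ B n ω ≤ b}).toReal
      = (∫ ω in {ω | B n ω ≤ b}, (g n ω - c) ∂P) + c * (P {ω | B n ω ≤ b}).toReal := by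
    intro n
    rw [integral_sub integrable_condExp.integrableOn (integrableOn_const (measure_ne_top _ _) : IntegrableOn (fun _ => c) _ P)]
    rw [hkey n, setIntegral_const, smul_eq_mul, mul_comm]
    unfold Measure.real
    ring
  simp_rw [hdecomp]
  have := hrem.add ((hBdist b).const_mul c)
  simpa using this
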